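/- Let each element of a finite set R of size n receive an independent uniform [0,1] rank. For k ≤ n, the expectation of (k−1)/τ, where τ is the k-th smallest rank, equals n; i.e., the bottom-k cardinality estimator (k−1)/τ is an unbiased estimator of |R| when |R| ≥ k. -/

import Mathlib

open MeasureTheory

/-- The `k`-th smallest value (k-th order statistic) of a family of reals. -/
noncomputable def kthSmallest {n : ℕ} (k : ℕ) (ω : Fin n → ℝ) : ℝ :=
  sInf {t : ℝ | k ≤ {i : Fin n | ω i ≤ t}.ncard}

namespace BKaux

variable {n : ℕ}

/-- counting function -/
noncomputable def cnt (ω : Fin n → ℝ) (t : ℝ) : ℕ := (Finset.univ.filter fun i => ω i ≤ t).card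

lemma ncard_eq (ω : Fin n → ℝ) (t : ℝ) : {i : Fin n | ω i ≤ t}.ncard = cnt ω t := by
  have : {i : Fin n | ω i ≤ t} = ↑(Finset.univ.filter fun i => ω i ≤ t) := by ext i; simp
  rw [this, Set.ncard_coe_finset, cnt]

lemma cnt_mono (ω : Fin n → ℝ) {s t : ℝ} (h : s ≤ t) : cnt ω s ≤ cnt ω t := by
  apply Finset.card_le_card
  intro i hi
  simp only [Finset.mem_filter] at *
  exact ⟨hi.1, hi.2.trans h⟩

lemma mem_set_iff (k : ℕ) (ω : Fin n → ℝ) (t : ℝ) :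
    t ∈ {t : ℝ | k ≤ {i : Fin n | ω i ≤ t}.ncard} ↔ k ≤ cnt ω t := by
  simp [ncard_eq]

lemma set_nonempty (k : ℕ) (hkn : k ≤ n) (ω : Fin n → ℝ) :
    {t : ℝ | k ≤ {i : Fin n | ω i ≤ t}.ncard}.Nonempty := by
  rcases Nat.eq_zero_or_pos n with h0 | h0
  · exact ⟨0, by simp [mem_set_iff, cnt, Nat.le_zero.mp (hkn.trans h0.le)]⟩
  obtain ⟨i₀, -, hmax⟩ := Finset.exists_max_image Finset.univ ω ⟨⟨0, h0⟩, Finset.mem_univ _⟩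
  refine ⟨ω i₀, ?_⟩
  rw [mem_set_iff]
  refine hkn.trans ?_
  have : (Finset.univ.filter fun i => ω i ≤ ω i₀) = Finset.univ := by
    apply Finset.filter_true_of_mem
    intro i _; exact hmax i (Finset.mem_univ i)
  simp [cnt, this]

lemma set_bddBelow (k : ℕ) (hk : 1 ≤ k) (ω : Fin n → ℝ) :
    BddBelow {t : ℝ | k ≤ {i : Fin n | ω i ≤ t}.ncard} := by
  rcases Nat.eq_zero_or_pos n with h0 | h0
  · refine ⟨0, fun t ht => ?_⟩
    rw [mem_set_iff] at ht
    exfalso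
    have hle : cnt ω t = 0 := by subst h0; simp [cnt]
    omega
  obtain ⟨i₀, -, hmin⟩ := Finset.exists_min_image Finset.univ ω ⟨⟨0, h0⟩, Finset.mem_univ _⟩
  refine ⟨ω i₀, fun t ht => ?_⟩
  rw [mem_set_iff] at ht
  have : (Finset.univ.filter fun i => ω i ≤ t).Nonempty := by
    exact Finset.card_pos.mp (lt_of_lt_of_le hk ht)
  obtain ⟨i, hi⟩ := this
  simp only [Finset.mem_filter] at hi
  exact le_trans (hmin i (Finset.mem_univ i)) hi.2

end BKaux

namespace BKaux

lemma sInf_mem_set {k : ℕ} (hk : 1 ≤ k) (hkn : k ≤ n) (ω : Fin n → ℝ) :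
    k ≤ cnt ω (kthSmallest k ω) := by
  set S := {t : ℝ | k ≤ {i : Fin n | ω i ≤ t}.ncard} with hS
  have hne := set_nonempty k hkn ω
  have hbdd := set_bddBelow k hk ω
  set m := kthSmallest k ω with hm
  by_contra hcon
  push_neg at hcon
  set T := Finset.univ.filter (fun i => m < ω i) with hT
  rcases T.eq_empty_or_nonempty with hTe | hTne
  · -- all ω i ≤ m, so cnt ω m = n ≥ k
    have : ∀ i, ω i ≤ m := by
      intro i
      by_contra h
      have : i ∈ T := by simp [hT, lt_of_not_ge h]
      simp [hTe] at this
    have : cnt ω m = n := by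
      have : (Finset.univ.filter fun i => ω i ≤ m) = Finset.univ :=
        Finset.filter_true_of_mem fun i _ => this i
      simp [cnt, this]
    omega
  obtain ⟨i₀, hi₀T, hmin⟩ := Finset.exists_min_image T ω hTne
  have hmi₀ : m < ω i₀ := by simpa [hT] using hi₀T
  have hlb : ∀ x ∈ S, ω i₀ ≤ x := by
    intro x hx
    by_contra hxlt
    push_neg at hxlt
    rw [mem_set_iff] at hx
    have hsub : (Finset.univ.filter fun i => ω i ≤ x) ⊆
        (Finset.univ.filter fun i => ω i ≤ m) := by
      intro i hi
      have hix : ω i ≤ x := (Finset.mem_filter.mp hi).2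
      refine Finset.mem_filter.mpr ⟨Finset.mem_univ i, ?_⟩
      by_contra h
      push_neg at h
      have hiT : i ∈ T := Finset.mem_filter.mpr ⟨Finset.mem_univ i, h⟩
      exact absurd (lt_of_le_of_lt hix hxlt) (not_lt.mpr (hmin i hiT))
    have hcc := Finset.card_le_card hsub
    have hx' : k ≤ (Finset.univ.filter fun i => ω i ≤ x).card := hx
    have hcon' : (Finset.univ.filter fun i => ω i ≤ m).card < k := hcon
    omega
  have : ω i₀ ≤ m := le_csInf hne hlb
  exact absurd hmi₀ (not_lt.mpr this)

lemma kthSmallest_le_iff {k : ℕ} (hk : 1 ≤ k) (hkn : k ≤ n) (ω : Fin n → ℝ) (s : ℝ) :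
    kthSmallest k ω ≤ s ↔ k ≤ cnt ω s := by
  constructor
  · intro h
    exact le_trans (sInf_mem_set hk hkn ω) (cnt_mono ω h)
  · intro h
    exact csInf_le (set_bddBelow k hk ω) ((mem_set_iff k ω s).mpr h)

lemma exists_eq_kthSmallest {k : ℕ} (hk : 1 ≤ k) (hkn : k ≤ n) (ω : Fin n → ℝ) :
    ∃ i, ω i = kthSmallest k ω := by
  set m := kthSmallest k ω with hm
  have hmem := sInf_mem_set hk hkn ω
  have hfne : (Finset.univ.filter fun i => ω i ≤ m).Nonempty :=
    Finset.card_pos.mp (lt_of_lt_of_le hk hmem)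
  obtain ⟨i₀, hi₀, hmax⟩ := Finset.exists_max_image _ ω hfne
  have hωm : ω i₀ ≤ m := by simpa using (Finset.mem_filter.mp hi₀).2
  refine ⟨i₀, le_antisymm hωm ?_⟩
  rw [hm]
  apply csInf_le (set_bddBelow k hk ω)
  rw [mem_set_iff]
  refine le_trans hmem (Finset.card_le_card ?_)
  intro j hj
  simp only [Finset.mem_filter, Finset.mem_univ, true_and] at *
  exact hmax j hj

lemma kthSmallest_bounds {k : ℕ} (hk : 1 ≤ k) (hkn : k ≤ n) {ω : Fin n → ℝ}
    (hω : ∀ i, ω i ∈ Set.Ioc (0 : ℝ) 1) :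
    0 < kthSmallest k ω ∧ kthSmallest k ω ≤ 1 := by
  constructor
  · obtain ⟨i, hi⟩ := exists_eq_kthSmallest hk hkn ω
    rw [← hi]; exact (hω i).1
  · rw [kthSmallest_le_iff hk hkn]
    have : (Finset.univ.filter fun i => ω i ≤ (1:ℝ)) = Finset.univ :=
      Finset.filter_true_of_mem fun i _ => (hω i).2
    simp [cnt, this, hkn]

end BKaux

namespace BKaux

lemma measurableSet_cnt_le (k : ℕ) (s : ℝ) :
    MeasurableSet {ω : Fin n → ℝ | k ≤ cnt ω s} := by
  have hm : Measurable fun ω : Fin n → ℝ => cnt ω s := by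
    have : (fun ω : Fin n → ℝ => cnt ω s)
        = fun ω => ∑ i : Fin n, if ω i ≤ s then 1 else 0 := by
      funext ω
      unfold cnt; rw [Finset.card_filter]
    rw [this]
    apply Finset.measurable_sum
    intro i _
    exact Measurable.ite ((measurable_pi_apply i) measurableSet_Iic)
      measurable_const measurable_const
  exact hm (measurableSet_Ici (a := k))

lemma measurable_kthSmallest {k : ℕ} (hk : 1 ≤ k) (hkn : k ≤ n) :
    Measurable (kthSmallest k : (Fin n → ℝ) → ℝ) := by
  apply measurable_of_Iic
  intro s
  have : (kthSmallest k : (Fin n → ℝ) → ℝ) ⁻¹' (Set.Iic s)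
      = {ω : Fin n → ℝ | k ≤ cnt ω s} := by
    ext ω
    simp [kthSmallest_le_iff hk hkn]
  rw [this]
  exact measurableSet_cnt_le k s

end BKaux

namespace BKaux

noncomputable def μ1 : Measure ℝ := volume.restrict (Set.Icc (0:ℝ) 1)

lemma μ1_Iic {s : ℝ} (h0 : 0 ≤ s) (h1 : s ≤ 1) : μ1 (Set.Iic s) = ENNReal.ofReal s := by
  rw [μ1, Measure.restrict_apply measurableSet_Iic]
  have : Set.Iic s ∩ Set.Icc 0 1 = Set.Icc 0 s := by
    ext x
    simp only [Set.mem_inter_iff, Set.mem_Iic, Set.mem_Icc]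
    constructor
    · rintro ⟨hx, hx0, -⟩; exact ⟨hx0, hx⟩
    · rintro ⟨hx0, hx⟩; exact ⟨hx, hx0, hx.trans h1⟩
  rw [this, Real.volume_Icc, sub_zero]

lemma μ1_Ioi {s : ℝ} (h0 : 0 ≤ s) : μ1 (Set.Ioi s) = ENNReal.ofReal (1 - s) := by
  rw [μ1, Measure.restrict_apply measurableSet_Ioi]
  have : Set.Ioi s ∩ Set.Icc 0 1 = Set.Ioc s 1 := by
    ext x
    simp only [Set.mem_inter_iff, Set.mem_Ioi, Set.mem_Icc, Set.mem_Ioc]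
    constructor
    · rintro ⟨hx, -, hx1⟩; exact ⟨hx, hx1⟩
    · rintro ⟨hx, hx1⟩; exact ⟨hx, (h0.trans hx.le), hx1⟩
  rw [this, Real.volume_Ioc]

instance : NullSingletonClass (μ1) := Measure.restrict.instNullSingletonClass _

instance : IsProbabilityMeasure (μ1) := by
  constructor
  rw [μ1, Measure.restrict_apply_univ, Real.volume_Icc]
  norm_num

noncomputable def Pn (n : ℕ) : Measure (Fin n → ℝ) := Measure.pi fun _ => μ1

instance (n : ℕ) : IsProbabilityMeasure (Pn n) := by
  rw [Pn]; infer_instance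

/-- the event that exactly the coordinates in `A` are `≤ s` -/
def EA (A : Finset (Fin n)) (s : ℝ) : Set (Fin n → ℝ) :=
  Set.univ.pi fun i => if i ∈ A then Set.Iic s else Set.Ioi s

lemma mem_EA {A : Finset (Fin n)} {s : ℝ} {ω : Fin n → ℝ} :
    ω ∈ EA A s ↔ ∀ i, (i ∈ A ↔ ω i ≤ s) := by
  simp only [EA, Set.mem_pi, Set.mem_univ, forall_true_left]
  constructor
  · intro h i
    rcases Classical.em (i ∈ A) with hi | hi
    · have := h i; rw [if_pos hi] at this; exact ⟨fun _ => this, fun _ => hi⟩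
    · have := h i; rw [if_neg hi] at this
      exact ⟨fun h' => absurd h' hi, fun h' => absurd h' (not_le.mpr this)⟩
  · intro h i
    rcases Classical.em (i ∈ A) with hi | hi
    · rw [if_pos hi]; exact (h i).mp hi
    · rw [if_neg hi]; exact not_le.mp (fun h' => hi ((h i).mpr h'))

lemma measure_EA (A : Finset (Fin n)) {s : ℝ} (h0 : 0 ≤ s) (h1 : s ≤ 1) :
    Pn n (EA A s) = ENNReal.ofReal s ^ A.card * ENNReal.ofReal (1 - s) ^ (n - A.card) := by
  rw [Pn, EA, Measure.pi_pi]
  have : ∀ i : Fin n, μ1 (if i ∈ A then Set.Iic s else Set.Ioi s)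
      = if i ∈ A then ENNReal.ofReal s else ENNReal.ofReal (1 - s) := by
    intro i
    rcases Classical.em (i ∈ A) with hi | hi
    · rw [if_pos hi, if_pos hi, μ1_Iic h0 h1]
    · rw [if_neg hi, if_neg hi, μ1_Ioi h0]
  simp_rw [this]
  rw [Finset.prod_ite, Finset.prod_const, Finset.prod_const]
  congr 1
  · congr 1
    simp [Finset.filter_mem_eq_inter]
  · congr 1
    have : (Finset.filter (fun x => x ∉ A) Finset.univ) = Aᶜ := by
      ext i; simp
    rw [this, Finset.card_compl, Fintype.card_fin]

lemma measurableSet_EA (A : Finset (Fin n)) (s : ℝ) : MeasurableSet (EA A s) := by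
  apply MeasurableSet.univ_pi
  intro i
  rcases Classical.em (i ∈ A) with hi | hi
  · simp only [if_pos hi]; exact measurableSet_Iic
  · simp only [if_neg hi]; exact measurableSet_Ioi

lemma cdf_event_eq (k : ℕ) (s : ℝ) :
    {ω : Fin n → ℝ | k ≤ cnt ω s}
      = ⋃ A ∈ Finset.univ.powerset.filter (fun A : Finset (Fin n) => k ≤ A.card),
          EA A s := by
  ext ω
  simp only [Set.mem_setOf_eq, Set.mem_iUnion, Finset.mem_filter, Finset.mem_powerset]
  constructor
  · intro h
    refine ⟨Finset.univ.filter fun i => ω i ≤ s, ⟨⟨Finset.filter_subset _ _, h⟩, ?_⟩⟩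
    rw [mem_EA]
    intro i
    simp
  · rintro ⟨A, ⟨⟨-, hk⟩, hmem⟩⟩
    rw [mem_EA] at hmem
    refine le_trans hk (le_of_eq ?_)
    rw [cnt]
    congr 1
    ext i
    simp [hmem i]

lemma measure_cdf_event (k : ℕ) {s : ℝ} (h0 : 0 ≤ s) (h1 : s ≤ 1) :
    Pn n {ω : Fin n → ℝ | k ≤ cnt ω s}
      = ∑ j ∈ Finset.range (n+1), (n.choose j) •
          (if k ≤ j then ENNReal.ofReal s ^ j * ENNReal.ofReal (1 - s) ^ (n - j) else 0) := by
  rw [cdf_event_eq k s, measure_biUnion_finset ?hd ?hm]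
  case hd =>
    intro A hA B hB hAB
    simp only [Function.onFun]
    rw [Set.disjoint_left]
    intro ω hωA hωB
    rw [mem_EA] at hωA hωB
    apply hAB
    ext i
    rw [hωA i, hωB i]
  case hm => exact fun A _ => measurableSet_EA A s
  have : ∀ A ∈ Finset.univ.powerset.filter (fun A : Finset (Fin n) => k ≤ A.card),
      Pn n (EA A s) = ENNReal.ofReal s ^ A.card * ENNReal.ofReal (1 - s) ^ (n - A.card) :=
    fun A _ => measure_EA A h0 h1
  rw [Finset.sum_congr rfl this, Finset.sum_filter]
  have hp := Finset.sum_powerset_apply_card (x := (Finset.univ : Finset (Fin n)))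
    (fun j => if k ≤ j then ENNReal.ofReal s ^ j * ENNReal.ofReal (1 - s) ^ (n - j) else 0)
  simp only [Finset.card_univ, Fintype.card_fin] at hp
  exact hp

lemma betaNat (a b : ℕ) :
    ∫ s in (0:ℝ)..1, s ^ a * (1 - s) ^ b
      = (a.factorial * b.factorial : ℝ) / ((a + b + 1).factorial) := by
  induction b generalizing a with
  | zero =>
    simp only [pow_zero, mul_one, integral_pow, Nat.factorial]
    rw [one_pow, zero_pow (by omega), sub_zero]
    have hfa : ((a.succ * a.factorial : ℕ) : ℝ) = (a + 1) * a.factorial := by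
      push_cast; ring
    rw [hfa]
    have : (a.factorial : ℝ) ≠ 0 := by positivity
    field_simp
    norm_num
  | succ b ih =>
    have key := intervalIntegral.integral_mul_deriv_eq_deriv_mul
      (u := fun s : ℝ => (1 - s) ^ (b + 1))
      (u' := fun s : ℝ => -((b + 1 : ℝ) * (1 - s) ^ b))
      (v := fun s : ℝ => s ^ (a + 1) / (a + 1))
      (v' := fun s : ℝ => s ^ a) (a := (0:ℝ)) (b := (1:ℝ))
      (fun x _ => by
        have h1 : HasDerivAt (fun s : ℝ => 1 - s) (-1) x := by
          simpa using (hasDerivAt_id x).const_sub 1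
        have := h1.fun_pow (b + 1)
        simpa [mul_comm, mul_assoc, mul_left_comm] using this)
      (fun x _ => by
        have h1 : HasDerivAt (fun s : ℝ => s ^ (a + 1)) ((a + 1 : ℝ) * x ^ a) x := by
          simpa using hasDerivAt_pow (a + 1) x
        have := h1.div_const (a + 1 : ℝ)
        have ha : (a + 1 : ℝ) ≠ 0 := by positivity
        simpa [mul_div_assoc, mul_div_cancel_left₀ _ ha] using this)
      (by apply Continuous.intervalIntegrable; continuity)
      (by apply Continuous.intervalIntegrable; continuity)
    -- key : ∫ (1-s)^(b+1) * s^a = ... - ∫ (-(b+1)(1-s)^b) * (s^(a+1)/(a+1))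
    have lhs_eq : ∫ s in (0:ℝ)..1, s ^ a * (1 - s) ^ (b + 1)
        = ∫ s in (0:ℝ)..1, (1 - s) ^ (b + 1) * s ^ a := by
      congr 1; funext s; ring
    rw [lhs_eq, key]
    have rhs_eq : ∫ s in (0:ℝ)..1, -((b + 1 : ℝ) * (1 - s) ^ b) * (s ^ (a + 1) / (a + 1))
        = -((b + 1 : ℝ) / (a + 1)) * ∫ s in (0:ℝ)..1, s ^ (a + 1) * (1 - s) ^ b := by
      rw [← intervalIntegral.integral_const_mul]
      congr 1; funext s; field_simp
    rw [rhs_eq, ih (a + 1)]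
    have ha : (a + 1 : ℝ) ≠ 0 := by positivity
    have hf1 : ((a + 1 + b + 1).factorial : ℝ) ≠ 0 := by positivity
    have hf2 : ((a + (b + 1) + 1).factorial : ℝ) ≠ 0 := by positivity
    have hternary : a + 1 + b + 1 = a + (b + 1) + 1 := by omega
    rw [hternary]
    have hfs : ((a + 1).factorial : ℝ) = (a + 1) * a.factorial := by
      rw [Nat.factorial_succ]; push_cast; ring
    have hbs : ((b + 1).factorial : ℝ) = (b + 1) * b.factorial := by
      rw [Nat.factorial_succ]; push_cast; ring
    rw [hfs, hbs]
    simp only [sub_self, zero_pow (Nat.succ_ne_zero b), one_pow, zero_mul, mul_zero,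
      zero_div, zero_sub, sub_zero, neg_neg, neg_mul]
    field_simp
    ring

lemma termA {j n : ℕ} (hj : 2 ≤ j) (hjn : j ≤ n) :
    ((n.choose j : ℝ) * ((j - 2).factorial * (n - j).factorial)) / (n - 1).factorial
      = (n : ℝ) * ((1:ℝ)/(j - 1) - 1/j) := by
  obtain ⟨m, rfl⟩ : ∃ m, j = m + 2 := ⟨j - 2, by omega⟩
  obtain ⟨p, rfl⟩ : ∃ p, n = p + 1 := ⟨n - 1, by omega⟩
  have hq : p + 1 - (m + 2) = p - m - 1 := by omega
  have hsub2 : m + 2 - 2 = m := by omega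
  have hsub1 : p + 1 - 1 = p := by omega
  rw [hq, hsub2, hsub1]
  have hcf := Nat.choose_mul_factorial_mul_factorial hjn
  rw [hq] at hcf
  have hcfR : ((p+1).choose (m+2) : ℝ) * (m+2).factorial * (p - m - 1).factorial
      = (p+1).factorial := by exact_mod_cast congrArg (Nat.cast : ℕ → ℝ) hcf
  have e1 : ((m+2).factorial : ℝ) = (m+2) * (m+1) * m.factorial := by
    rw [Nat.factorial_succ, Nat.factorial_succ]; push_cast; ring
  have e2 : ((p+1).factorial : ℝ) = (p+1) * p.factorial := by
    rw [Nat.factorial_succ]; push_cast; ring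
  rw [e1, e2] at hcfR
  have hm1 : ((m:ℝ) + 2) - 1 = (m:ℝ) + 1 := by ring
  push_cast
  rw [hm1]
  have h1 : ((m:ℝ) + 1) ≠ 0 := by positivity
  have h2 : ((m:ℝ) + 2) ≠ 0 := by positivity
  have h3 : (p.factorial : ℝ) ≠ 0 := by positivity
  have h4 : (m.factorial : ℝ) ≠ 0 := by positivity
  have h5 : ((p - m - 1).factorial : ℝ) ≠ 0 := by positivity
  field_simp
  nlinarith [hcfR, sq_nonneg ((m:ℝ)+1)]

lemma tele (k : ℕ) (hk : 2 ≤ k) : ∀ n, k ≤ n →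
    ∑ j ∈ Finset.Icc k n, ((1:ℝ)/(j - 1) - 1/j) = 1/(k - 1) - 1/n := by
  intro n
  induction n with
  | zero => intro h; omega
  | succ n ih =>
    intro h
    rcases Nat.lt_or_ge n k with hlt | hge
    · have : k = n + 1 := by omega
      subst this
      simp
    · rw [Finset.sum_Icc_succ_top (by omega : k ≤ n + 1), ih hge]
      have hn : (n:ℝ) ≠ 0 := by
        have : 0 < n := by omega
        positivity
      have hn1 : ((n:ℝ) + 1) ≠ 0 := by positivity
      push_cast
      have : ((n:ℝ) + 1) - 1 = (n:ℝ) := by ring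
      rw [this]
      field_simp
      ring

lemma inv_sq_integrableOn {u : ℝ} (hu : 0 < u) :
    IntegrableOn (fun s : ℝ => s⁻¹ ^ 2) (Set.Ioo u 1) := by
  apply (ContinuousOn.integrableOn_compact isCompact_Icc ?_).mono_set Set.Ioo_subset_Icc_self
  apply ContinuousOn.pow
  refine ContinuousOn.inv₀ continuousOn_id fun x hx => ?_
  exact fun h0 => absurd (h0 ▸ hx.1) (not_le.mpr hu)

lemma g_eval {u : ℝ} (hu : 0 < u) (hu1 : u ≤ 1) :
    (∫⁻ s in Set.Ioo (0:ℝ) 1, (Set.Ioi u).indicator (fun s => ENNReal.ofReal (s⁻¹ ^ 2)) s)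
      = ENNReal.ofReal (u⁻¹ - 1) := by
  rw [lintegral_indicator measurableSet_Ioi, Measure.restrict_restrict measurableSet_Ioi]
  have hset : Set.Ioi u ∩ Set.Ioo 0 1 = Set.Ioo u 1 := by
    ext x
    simp only [Set.mem_inter_iff, Set.mem_Ioi, Set.mem_Ioo]
    constructor
    · rintro ⟨h1, -, h3⟩; exact ⟨h1, h3⟩
    · rintro ⟨h1, h2⟩; exact ⟨h1, hu.trans h1, h2⟩
  rw [hset]
  rw [← ofReal_integral_eq_lintegral_ofReal (inv_sq_integrableOn hu)
    (Filter.Eventually.of_forall fun s => by positivity)]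
  congr 1
  have h1 : ∫ s in Set.Ioo u 1, s⁻¹ ^ 2 = ∫ s in Set.Ioc u 1, s⁻¹ ^ 2 :=
    (MeasureTheory.integral_Ioc_eq_integral_Ioo).symm
  rw [h1, ← intervalIntegral.integral_of_le hu1]
  have h2 : ∀ s : ℝ, s⁻¹ ^ 2 = s ^ (-2 : ℤ) := by
    intro s
    rw [zpow_neg, inv_pow, zpow_two, sq]
  simp_rw [h2]
  rw [integral_zpow]
  · norm_num
    ring
  · right
    constructor
    · norm_num
    · intro hmem
      rw [Set.mem_uIcc] at hmem
      rcases hmem with ⟨h3, -⟩ | ⟨h4, -⟩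
      · exact absurd h3 (not_le.mpr hu)
      · linarith

lemma ofReal_inv_eq {u : ℝ} (hu : 0 < u) (hu1 : u ≤ 1) :
    ENNReal.ofReal (1 / u)
      = 1 + ∫⁻ s in Set.Ioo (0:ℝ) 1, (Set.Ioi u).indicator
          (fun s => ENNReal.ofReal (s⁻¹ ^ 2)) s := by
  rw [g_eval hu hu1]
  have h1 : (1 : ENNReal) = ENNReal.ofReal 1 := by simp
  have h2 : (0:ℝ) ≤ u⁻¹ - 1 := by
    rw [sub_nonneg]
    exact (one_le_inv₀ hu).mpr hu1
  rw [h1, ← ENNReal.ofReal_add (by norm_num) h2]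
  congr 1
  rw [one_div]
  ring

lemma measure_lt_eq_measure_le {k : ℕ} (hk : 1 ≤ k) (hkn : k ≤ n) (s : ℝ) :
    Pn n {ω : Fin n → ℝ | kthSmallest k ω < s}
      = Pn n {ω : Fin n → ℝ | kthSmallest k ω ≤ s} := by
  apply le_antisymm
  · exact measure_mono fun ω hω => le_of_lt (Set.mem_setOf_eq ▸ hω)
  · have hsub : {ω : Fin n → ℝ | kthSmallest k ω ≤ s}
        ⊆ {ω | kthSmallest k ω < s} ∪ ⋃ i : Fin n, {ω | ω i = s} := by
      intro ω hω
      have hω' : kthSmallest k ω ≤ s := hω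
      rcases lt_or_eq_of_le hω' with h | h
      · exact Or.inl h
      · obtain ⟨i, hi⟩ := exists_eq_kthSmallest hk hkn ω
        exact Or.inr (Set.mem_iUnion.mpr ⟨i, by rw [Set.mem_setOf_eq, hi, h]⟩)
    refine le_trans (measure_mono hsub) ?_
    refine le_trans (measure_union_le _ _) ?_
    have : Pn n (⋃ i : Fin n, {ω : Fin n → ℝ | ω i = s}) = 0 := by
      apply measure_iUnion_null
      intro i
      rw [Pn]
      exact Measure.pi_hyperplane (fun _ : Fin n => μ1) i s
    rw [this, add_zero]

lemma measure_lt_eval {k : ℕ} (hk : 1 ≤ k) (hkn : k ≤ n) {s : ℝ} (h0 : 0 ≤ s) (h1 : s ≤ 1) :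
    Pn n {ω : Fin n → ℝ | kthSmallest k ω < s}
      = ∑ j ∈ Finset.range (n+1), (n.choose j) •
          (if k ≤ j then ENNReal.ofReal s ^ j * ENNReal.ofReal (1 - s) ^ (n - j) else 0) := by
  rw [measure_lt_eq_measure_le hk hkn s]
  have : {ω : Fin n → ℝ | kthSmallest k ω ≤ s} = {ω : Fin n → ℝ | k ≤ cnt ω s} := by
    ext ω
    exact kthSmallest_le_iff hk hkn ω s
  rw [this, measure_cdf_event k h0 h1]

lemma term_lintegral {j n : ℕ} (hj2 : 2 ≤ j) (hjn : j ≤ n) :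
    ∫⁻ s in Set.Ioo (0:ℝ) 1, ENNReal.ofReal (s⁻¹ ^ 2)
        * (ENNReal.ofReal s ^ j * ENNReal.ofReal (1 - s) ^ (n - j))
      = ENNReal.ofReal ((((j-2).factorial * (n-j).factorial : ℕ) : ℝ) / ((n-1).factorial : ℝ)) := by
  have hcong : ∀ s ∈ Set.Ioo (0:ℝ) 1,
      ENNReal.ofReal (s⁻¹ ^ 2) * (ENNReal.ofReal s ^ j * ENNReal.ofReal (1 - s) ^ (n - j))
        = ENNReal.ofReal (s ^ (j - 2) * (1 - s) ^ (n - j)) := by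
    intro s hs
    obtain ⟨hs0, hs1⟩ := hs
    rw [← ENNReal.ofReal_pow hs0.le, ← ENNReal.ofReal_pow (by linarith : (0:ℝ) ≤ 1 - s),
      ← ENNReal.ofReal_mul (by positivity), ← ENNReal.ofReal_mul (by positivity)]
    congr 1
    have hpow : s ^ j = s ^ (j - 2) * s ^ 2 := by
      rw [← pow_add]
      congr 1
      omega
    rw [hpow]
    have hs0' : s ≠ 0 := ne_of_gt hs0
    field_simp
  rw [setLIntegral_congr_fun measurableSet_Ioo hcong]
  have hint : IntegrableOn (fun s : ℝ => s ^ (j - 2) * (1 - s) ^ (n - j)) (Set.Ioo 0 1) := by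
    apply (ContinuousOn.integrableOn_compact (isCompact_Icc (a := (0:ℝ)) (b := 1)) ?_).mono_set
      Set.Ioo_subset_Icc_self
    exact (Continuous.continuousOn (by continuity))
  have hnn : 0 ≤ᵐ[volume.restrict (Set.Ioo (0:ℝ) 1)]
      fun s : ℝ => s ^ (j - 2) * (1 - s) ^ (n - j) := by
    rw [Filter.EventuallyLE, ae_restrict_iff' measurableSet_Ioo]
    apply Filter.Eventually.of_forall
    intro s hs
    obtain ⟨hs0, hs1⟩ := hs
    have h1 : (0:ℝ) ≤ 1 - s := by linarith
    positivity
  rw [← ofReal_integral_eq_lintegral_ofReal hint hnn]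
  congr 1
  have h1 : ∫ s in Set.Ioo (0:ℝ) 1, s ^ (j-2) * (1-s) ^ (n-j)
      = ∫ s in (0:ℝ)..1, s ^ (j-2) * (1-s) ^ (n-j) := by
    rw [intervalIntegral.integral_of_le (by norm_num : (0:ℝ) ≤ 1),
      MeasureTheory.integral_Ioc_eq_integral_Ioo]
  rw [h1, betaNat]
  have : j - 2 + (n - j) + 1 = n - 1 := by omega
  rw [this]
  push_cast
  ring

lemma final_arith {n k : ℕ} (hk : 2 ≤ k) (hkn : k ≤ n) :
    ((k:ℝ) - 1) * (1 + ∑ j ∈ Finset.Icc k n,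
        ((n.choose j : ℝ) * (((j-2).factorial : ℝ) * ((n-j).factorial : ℝ))) / ((n-1).factorial : ℝ))
      = (n : ℝ) := by
  have hterm : ∀ j ∈ Finset.Icc k n,
      ((n.choose j : ℝ) * (((j-2).factorial : ℝ) * ((n-j).factorial : ℝ))) / ((n-1).factorial : ℝ)
        = (n : ℝ) * ((1:ℝ)/(j - 1) - 1/j) := by
    intro j hj
    rw [Finset.mem_Icc] at hj
    exact termA (hk.trans hj.1) hj.2
  rw [Finset.sum_congr rfl hterm, ← Finset.mul_sum, tele k hk n hkn]
  have hn0 : (n:ℝ) ≠ 0 := by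
    have : 0 < n := by omega
    positivity
  have hk1 : (k:ℝ) - 1 ≠ 0 := by
    have : (1:ℝ) < k := by exact_mod_cast (by omega : 1 < k)
    linarith
  field_simp
  ring

end BKaux

open BKaux

/-- with i.i.d. uniform `[0,1]` ranks on `n` elements and `2 ≤ k ≤ n`,
the bottom-`k` estimator `(k−1)/τ` (with `τ` the `k`-th smallest rank) is an unbiased
estimator of the cardinality `n`. -/
theorem bottom_k_estimator_unbiased (n k : ℕ) (hk : 2 ≤ k) (hkn : k ≤ n) :
    ∫ ω : Fin n → ℝ, ((k : ℝ) - 1) / kthSmallest k ω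
        ∂(Measure.pi fun _ : Fin n => volume.restrict (Set.Icc (0 : ℝ) 1)) =
      (n : ℝ) := by
  have hk1 : 1 ≤ k := by omega
  have hF : Measurable (kthSmallest k : (Fin n → ℝ) → ℝ) := measurable_kthSmallest hk1 hkn
  have hP : (Measure.pi fun _ : Fin n => volume.restrict (Set.Icc (0 : ℝ) 1)) = Pn n := rfl
  rw [hP]
  -- the full-measure set where all coordinates are in (0,1]
  have hΩ : ∀ᵐ ω ∂(Pn n), ∀ i, ω i ∈ Set.Ioc (0:ℝ) 1 := by
    have hmeas : MeasurableSet (Set.univ.pi fun _ : Fin n => Set.Ioc (0:ℝ) 1) :=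
      MeasurableSet.univ_pi fun _ => measurableSet_Ioc
    have hμIoc : μ1 (Set.Ioc (0:ℝ) 1) = 1 := by
      rw [μ1, Measure.restrict_apply measurableSet_Ioc]
      have : Set.Ioc (0:ℝ) 1 ∩ Set.Icc 0 1 = Set.Ioc 0 1 := by
        apply Set.inter_eq_left.mpr
        intro x hx
        exact ⟨hx.1.le, hx.2⟩
      rw [this, Real.volume_Ioc]
      norm_num
    have hfull : Pn n (Set.univ.pi fun _ : Fin n => Set.Ioc (0:ℝ) 1) = 1 := by
      rw [Pn, Measure.pi_pi]
      simp [hμIoc]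
    rw [ae_iff]
    have hcompl : {ω : Fin n → ℝ | ¬ ∀ i, ω i ∈ Set.Ioc (0:ℝ) 1}
        = (Set.univ.pi fun _ : Fin n => Set.Ioc (0:ℝ) 1)ᶜ := by
      ext ω; simp [Set.mem_pi]
    rw [hcompl, measure_compl hmeas (measure_ne_top _ _), hfull, measure_univ, tsub_self]
  have hkR : (0:ℝ) ≤ (k:ℝ) - 1 := by
    have : (1:ℝ) ≤ k := by exact_mod_cast hk1
    linarith
  have hnn : 0 ≤ᵐ[Pn n] fun ω => ((k : ℝ) - 1) / kthSmallest k ω := by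
    filter_upwards [hΩ] with ω hω
    have := (kthSmallest_bounds hk1 hkn hω).1
    positivity
  rw [integral_eq_lintegral_of_nonneg_ae hnn
    (measurable_const.div hF).aestronglyMeasurable]
  -- pointwise rewrite of the integrand
  have hstep1 : ∀ᵐ ω ∂(Pn n), ENNReal.ofReal (((k : ℝ) - 1) / kthSmallest k ω)
      = ENNReal.ofReal ((k:ℝ) - 1) *
          (1 + ∫⁻ s in Set.Ioo (0:ℝ) 1, (Set.Ioi (kthSmallest k ω)).indicator
            (fun s => ENNReal.ofReal (s⁻¹ ^ 2)) s) := by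
    filter_upwards [hΩ] with ω hω
    obtain ⟨hpos, hle⟩ := kthSmallest_bounds hk1 hkn hω
    rw [div_eq_mul_one_div, ENNReal.ofReal_mul hkR, ofReal_inv_eq hpos hle]
  rw [lintegral_congr_ae hstep1]
  rw [lintegral_const_mul' _ _ ENNReal.ofReal_ne_top]
  -- split off the constant 1
  have hsplit : ∫⁻ ω, (1 + ∫⁻ s in Set.Ioo (0:ℝ) 1, (Set.Ioi (kthSmallest k ω)).indicator
        (fun s => ENNReal.ofReal (s⁻¹ ^ 2)) s) ∂(Pn n)
      = 1 + ∫⁻ ω, (∫⁻ s in Set.Ioo (0:ℝ) 1, (Set.Ioi (kthSmallest k ω)).indicator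
        (fun s => ENNReal.ofReal (s⁻¹ ^ 2)) s) ∂(Pn n) := by
    rw [lintegral_add_left measurable_const, lintegral_const, measure_univ, mul_one]
  rw [hsplit]
  -- swap the two integrals
  have hswap : ∫⁻ ω, (∫⁻ s in Set.Ioo (0:ℝ) 1, (Set.Ioi (kthSmallest k ω)).indicator
        (fun s => ENNReal.ofReal (s⁻¹ ^ 2)) s) ∂(Pn n)
      = ∫⁻ s in Set.Ioo (0:ℝ) 1, (∫⁻ ω, (Set.Ioi (kthSmallest k ω)).indicator
        (fun s => ENNReal.ofReal (s⁻¹ ^ 2)) s ∂(Pn n)) := by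
    apply lintegral_lintegral_swap
    have heq : (Function.uncurry fun (ω : Fin n → ℝ) (s : ℝ) =>
        (Set.Ioi (kthSmallest k ω)).indicator (fun s => ENNReal.ofReal (s⁻¹ ^ 2)) s)
        = fun p : (Fin n → ℝ) × ℝ =>
            ({q : (Fin n → ℝ) × ℝ | kthSmallest k q.1 < q.2}).indicator
              (fun q => ENNReal.ofReal ((q.2)⁻¹ ^ 2)) p := by
      funext p
      rw [Function.uncurry]
      rw [Set.indicator_apply, Set.indicator_apply]
      simp [Set.mem_Ioi]
    rw [heq]
    apply Measurable.aemeasurable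
    apply Measurable.indicator
    · exact ENNReal.measurable_ofReal.comp ((measurable_snd.inv).pow_const 2)
    · exact measurableSet_lt (hF.comp measurable_fst) measurable_snd
  rw [hswap]
  -- evaluate the inner integral
  have hinner : ∀ s ∈ Set.Ioo (0:ℝ) 1,
      (∫⁻ ω, (Set.Ioi (kthSmallest k ω)).indicator
        (fun s => ENNReal.ofReal (s⁻¹ ^ 2)) s ∂(Pn n))
      = ENNReal.ofReal (s⁻¹ ^ 2) * ∑ j ∈ Finset.range (n+1), (n.choose j) •
          (if k ≤ j then ENNReal.ofReal s ^ j * ENNReal.ofReal (1 - s) ^ (n - j) else 0) := by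
    intro s hs
    have heq2 : (fun ω => (Set.Ioi (kthSmallest k ω)).indicator
        (fun s => ENNReal.ofReal (s⁻¹ ^ 2)) s)
        = fun ω => ({ω' : Fin n → ℝ | kthSmallest k ω' < s}).indicator
            (fun _ => ENNReal.ofReal (s⁻¹ ^ 2)) ω := by
      funext ω
      rw [Set.indicator_apply, Set.indicator_apply]
      simp [Set.mem_Ioi]
    rw [heq2, lintegral_indicator ?hm, setLIntegral_const]
    case hm =>
      have : {ω' : Fin n → ℝ | kthSmallest k ω' < s}
          = (kthSmallest k : (Fin n → ℝ) → ℝ) ⁻¹' (Set.Iio s) := rfl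
      rw [this]
      exact hF measurableSet_Iio
    rw [measure_lt_eval hk1 hkn hs.1.le hs.2.le]
  rw [setLIntegral_congr_fun measurableSet_Ioo hinner]
  -- distribute and integrate term by term
  have hdist : ∀ s ∈ Set.Ioo (0:ℝ) 1,
      ENNReal.ofReal (s⁻¹ ^ 2) * ∑ j ∈ Finset.range (n+1), (n.choose j) •
          (if k ≤ j then ENNReal.ofReal s ^ j * ENNReal.ofReal (1 - s) ^ (n - j) else 0)
      = ∑ j ∈ Finset.range (n+1), (n.choose j : ENNReal) *
          (if k ≤ j then ENNReal.ofReal (s⁻¹ ^ 2)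
            * (ENNReal.ofReal s ^ j * ENNReal.ofReal (1 - s) ^ (n - j)) else 0) := by
    intro s _
    rw [Finset.mul_sum]
    apply Finset.sum_congr rfl
    intro j _
    rw [nsmul_eq_mul]
    rcases Classical.em (k ≤ j) with h | h
    · rw [if_pos h, if_pos h]; ring
    · rw [if_neg h, if_neg h]; ring
  rw [setLIntegral_congr_fun measurableSet_Ioo hdist]
  rw [lintegral_finset_sum]
  case hf =>
    intro j _
    apply Measurable.const_mul
    rcases Classical.em (k ≤ j) with h | h
    · simp only [if_pos h]
      apply Measurable.fun_mul
      · exact ENNReal.measurable_ofReal.comp ((measurable_inv).pow_const 2)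
      · exact ((ENNReal.measurable_ofReal.comp measurable_id).pow_const j).mul
          ((ENNReal.measurable_ofReal.comp (measurable_const.sub measurable_id)).pow_const (n-j))
    · simp only [if_neg h]
      exact measurable_const
  -- evaluate each term
  have hterm : ∀ j ∈ Finset.range (n+1),
      ∫⁻ s in Set.Ioo (0:ℝ) 1, (n.choose j : ENNReal) *
          (if k ≤ j then ENNReal.ofReal (s⁻¹ ^ 2)
            * (ENNReal.ofReal s ^ j * ENNReal.ofReal (1 - s) ^ (n - j)) else 0)
      = ENNReal.ofReal ((n.choose j : ℝ) *
          (if k ≤ j then (((j-2).factorial : ℝ) * ((n-j).factorial : ℝ)) / ((n-1).factorial : ℝ)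
            else 0)) := by
    intro j hj
    rw [Finset.mem_range] at hj
    rw [lintegral_const_mul' _ _ (by simp : (n.choose j : ENNReal) ≠ ⊤)]
    rcases Classical.em (k ≤ j) with h | h
    · simp only [if_pos h]
      rw [term_lintegral (hk.trans h) (by omega : j ≤ n)]
      rw [ENNReal.ofReal_mul (by positivity)]
      congr 1
      · simp
      · push_cast
        ring_nf
    · simp only [if_neg h]
      simp
  rw [Finset.sum_congr rfl hterm]
  -- collapse everything into a single ofReal
  rw [← ENNReal.ofReal_sum_of_nonneg ?pos]
  case pos =>
    intro j _
    rcases Classical.em (k ≤ j) with h | h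
    · simp only [if_pos h]; positivity
    · simp only [if_neg h]; simp
  have h1R : (1 : ENNReal) = ENNReal.ofReal 1 := by simp
  rw [h1R, ← ENNReal.ofReal_add (by norm_num) ?pos2]
  case pos2 =>
    apply Finset.sum_nonneg
    intro j _
    rcases Classical.em (k ≤ j) with h | h
    · simp only [if_pos h]; positivity
    · simp only [if_neg h]; simp
  rw [← ENNReal.ofReal_mul hkR]
  -- final: real arithmetic
  have hsum_eq : ∑ j ∈ Finset.range (n+1), (n.choose j : ℝ) *
      (if k ≤ j then (((j-2).factorial : ℝ) * ((n-j).factorial : ℝ)) / ((n-1).factorial : ℝ)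
        else 0)
      = ∑ j ∈ Finset.Icc k n,
        ((n.choose j : ℝ) * (((j-2).factorial : ℝ) * ((n-j).factorial : ℝ))) / ((n-1).factorial : ℝ) := by
    have hite : ∀ j ∈ Finset.range (n+1), (n.choose j : ℝ) *
        (if k ≤ j then (((j-2).factorial : ℝ) * ((n-j).factorial : ℝ)) / ((n-1).factorial : ℝ)
          else 0)
        = if k ≤ j then (n.choose j : ℝ) *
            ((((j-2).factorial : ℝ) * ((n-j).factorial : ℝ)) / ((n-1).factorial : ℝ)) else 0 := by
      intro j _
      rw [mul_ite, mul_zero]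
    rw [Finset.sum_congr rfl hite, ← Finset.sum_filter]
    have hset : (Finset.range (n+1)).filter (fun j => k ≤ j) = Finset.Icc k n := by
      ext j
      simp only [Finset.mem_filter, Finset.mem_range, Finset.mem_Icc]
      omega
    rw [hset]
    apply Finset.sum_congr rfl
    intro j _
    ring
  rw [hsum_eq, final_arith hk hkn, ENNReal.toReal_ofReal (by positivity)]
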